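/- Two pairs (z, z₀) and (w, w₀) in ℍ × ℍ₀ (where ℍ₀ is the purely imaginary quaternions) lie in the same orbit of the action of the unit quaternions (h : (z, z₀) ↦ (zh⁻¹, h z₀ h⁻¹)) if and only if |z| = |w|, |z₀| = |w₀|, and z·z₀·conj(z) = w·w₀·conj(w). -/

import Mathlib

open scoped Quaternion

open Quaternion in
private lemma pure_sq (p : ℍ[ℝ]) (hp : p.re = 0) :
    p * p = -((normSq p : ℝ) : ℍ[ℝ]) := by
  have hs : star p = -p := by ext <;> simp [hp]
  have h := Quaternion.self_mul_star p
  rw [hs, mul_neg] at h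
  exact neg_eq_iff_eq_neg.mp h

private lemma unit_inv_eq_star (h : ℍ[ℝ]) (hh : ‖h‖ = 1) : h⁻¹ = star h := by
  have h1 : Quaternion.normSq h = 1 := by
    rw [Quaternion.normSq_eq_norm_mul_self, hh]; ring
  refine inv_eq_of_mul_eq_one_right ?_
  rw [Quaternion.self_mul_star, h1]
  norm_cast

/-- conjugate by a scaling of r, provided r*p = q*r -/
private lemma conj_of_swap (p q r : ℍ[ℝ]) (hr : r ≠ 0)
    (hswap : r * p = q * r) : ∃ h : ℍ[ℝ], ‖h‖ = 1 ∧ q = h * p * h⁻¹ := by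
  refine ⟨‖r‖⁻¹ • r, ?_, ?_⟩
  · rw [norm_smul, norm_inv, norm_norm, inv_mul_cancel₀ (norm_ne_zero_iff.mpr hr)]
  · have hne : (‖r‖⁻¹ • r) ≠ 0 := by
      simp [smul_eq_zero, hr, norm_ne_zero_iff.mpr hr]
    have hmul : (‖r‖⁻¹ • r) * p = q * (‖r‖⁻¹ • r) := by
      rw [smul_mul_assoc, mul_smul_comm, hswap]
    rw [hmul, mul_assoc, mul_inv_cancel₀ hne, mul_one]

open Quaternion in
private lemma pure_conjugate (p q : ℍ[ℝ]) (hp : p.re = 0) (hq : q.re = 0)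
    (hn : ‖p‖ = ‖q‖) : ∃ h : ℍ[ℝ], ‖h‖ = 1 ∧ q = h * p * h⁻¹ := by
  have hns : normSq p = normSq q := by
    rw [normSq_eq_norm_mul_self, normSq_eq_norm_mul_self, hn]
  by_cases hpq : p + q = 0
  · have hqp : q = -p := eq_neg_of_add_eq_zero_right hpq
    by_cases hp0 : p = 0
    · exact ⟨1, by simp, by simp [hqp, hp0]⟩
    · -- need r pure, nonzero, orthogonal to p: then r * p = -p * r
      by_cases hij : p.imI = 0 ∧ p.imJ = 0
      · refine conj_of_swap p q ((Quaternion.equivProd ℝ).symm (0, 1, 0, 0)) ?_ ?_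
        · intro hc
          have := congrArg QuaternionAlgebra.imI hc
          simpa using this
        · rw [hqp]
          ext <;> simp [Quaternion.re_mul, Quaternion.imI_mul, Quaternion.imJ_mul,
            Quaternion.imK_mul, hp, hij.1, hij.2] <;> ring
      · refine conj_of_swap p q ((Quaternion.equivProd ℝ).symm (0, p.imJ, -p.imI, 0)) ?_ ?_
        · intro hc
          apply hij
          constructor
          · have := congrArg QuaternionAlgebra.imJ hc; simpa using this
          · have := congrArg QuaternionAlgebra.imI hc; simpa using this
        · rw [hqp]
          ext <;> simp [Quaternion.re_mul, Quaternion.imI_mul, Quaternion.imJ_mul,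
            Quaternion.imK_mul, hp] <;> ring
  · refine conj_of_swap p q (p + q) hpq ?_
    have h1 : (p + q) * p = p * p + q * p := by noncomm_ring
    have h2 : q * (p + q) = q * p + q * q := by noncomm_ring
    rw [h1, h2, pure_sq p hp, pure_sq q hq, hns]
    abel

/-- Two pairs `(z, z₀)` and `(w, w₀)` in `ℍ × ℍ₀` (with `ℍ₀` the purely imaginary
quaternions) lie in the same orbit of the unit quaternions acting by
`h : (z, z₀) ↦ (z h⁻¹, h z₀ h⁻¹)` iff `|z| = |w|`, `|z₀| = |w₀|` and
`z z₀ conj z = w w₀ conj w`. -/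
theorem same_orbit_iff_quaternion_mixed_pair
    (z w z₀ w₀ : ℍ[ℝ]) (hz₀ : z₀.re = 0) (hw₀ : w₀.re = 0) :
    (∃ h : ℍ[ℝ], ‖h‖ = 1 ∧ w = z * h⁻¹ ∧ w₀ = h * z₀ * h⁻¹) ↔
      (‖z‖ = ‖w‖ ∧ ‖z₀‖ = ‖w₀‖ ∧ z * z₀ * star z = w * w₀ * star w) := by
  constructor
  · rintro ⟨h, hh, rfl, rfl⟩
    have hinv : h⁻¹ = star h := unit_inv_eq_star h hh
    have hsh : star h * h = 1 := by
      have h1 : Quaternion.normSq h = 1 := by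
        rw [Quaternion.normSq_eq_norm_mul_self, hh]; ring
      rw [Quaternion.star_mul_self, h1]; norm_cast
    refine ⟨?_, ?_, ?_⟩
    · rw [norm_mul, norm_inv, hh]; simp
    · rw [norm_mul, norm_mul, norm_inv, hh]; simp
    · rw [hinv, star_mul, star_star]
      have : z * star h * (h * z₀ * star h) * (h * star z)
          = z * (star h * h) * z₀ * (star h * h) * star z := by noncomm_ring
      rw [this, hsh]; simp
  · rintro ⟨h1, h2, h3⟩
    by_cases hz : z = 0
    · have hw : w = 0 := by
        rw [← norm_eq_zero, ← h1, hz, norm_zero]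
      obtain ⟨h, hhn, hconj⟩ := pure_conjugate z₀ w₀ hz₀ hw₀ h2
      exact ⟨h, hhn, by simp [hz, hw], hconj⟩
    · have hw : w ≠ 0 := by
        rw [← norm_ne_zero_iff, ← h1, norm_ne_zero_iff]; exact hz
      refine ⟨w⁻¹ * z, ?_, ?_, ?_⟩
      · rw [norm_mul, norm_inv, ← h1, inv_mul_cancel₀ (norm_ne_zero_iff.mpr hz)]
      · rw [mul_inv_rev, inv_inv, ← mul_assoc, mul_inv_cancel₀ hz, one_mul]
      · have hzinv : z⁻¹ = (Quaternion.normSq z)⁻¹ • star z := Quaternion.inv_def z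
        have hwinv : w⁻¹ = (Quaternion.normSq w)⁻¹ • star w := Quaternion.inv_def w
        have hns : Quaternion.normSq z = Quaternion.normSq w := by
          rw [Quaternion.normSq_eq_norm_mul_self, Quaternion.normSq_eq_norm_mul_self, h1]
        have key : z * z₀ * z⁻¹ = w * w₀ * w⁻¹ := by
          rw [hzinv, hwinv, mul_smul_comm, mul_smul_comm, h3, hns]
        calc w₀ = w⁻¹ * (w * w₀ * w⁻¹) * w := by
              rw [← mul_assoc, ← mul_assoc, inv_mul_cancel₀ hw, one_mul,
                mul_assoc, inv_mul_cancel₀ hw, mul_one]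
          _ = w⁻¹ * (z * z₀ * z⁻¹) * w := by rw [key]
          _ = w⁻¹ * z * z₀ * (w⁻¹ * z)⁻¹ := by
              rw [mul_inv_rev, inv_inv]; noncomm_ring
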